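/- arXiv:1408.1283 — 6 statements merged into one kernel-verified Lean document; each statement's English description precedes it below -/
import Mathlib

section
/- The characteristic polynomial of the graph S_{n,n+3} (the star on n vertices with 4 additional edges all joining pairs of leaves adjacent to one common leaf, i.e., the star S_n plus e−n+1 = 4 extra edges all connected to the same vertex) is x^n − (n+3)x^{n−2} − 8x^{n−3} + (4n−24)x^{n−4}. -/
open Polynomial MeasureTheory

/-- The adjacency matrix of a simple graph over `ℝ` is Hermitian. -/
lemma adjHerm {V : Type*} [Fintype V] (G : SimpleGraph V) [DecidableRel G.Adj] :
    (SimpleGraph.adjMatrix ℝ G).IsHermitian := by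
  ext i j
  simp [Matrix.conjTranspose_apply, SimpleGraph.adj_comm]

/-- The energy of a graph: sum of absolute values of adjacency eigenvalues. -/
noncomputable def energy {V : Type*} [Fintype V] [DecidableEq V] (G : SimpleGraph V)
    [DecidableRel G.Adj] : ℝ :=
  ∑ i, |(adjHerm G).eigenvalues i|

/-- `SnE n k` is the graph `S_{n, n-1+k}`: the star on `n` vertices with center `0`,
plus `k` extra edges joining the fixed leaf `1` to the leaves `2, …, k+1`. -/
def SnE (n k : ℕ) : SimpleGraph (Fin n) where
  Adj v w := v ≠ w ∧ (v.val = 0 ∨ w.val = 0 ∨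
    (v.val = 1 ∧ 2 ≤ w.val ∧ w.val ≤ k + 1) ∨ (w.val = 1 ∧ 2 ≤ v.val ∧ v.val ≤ k + 1))
  symm := by constructor; intro v w h; exact ⟨h.1.symm, by tauto⟩
  loopless := by constructor; intro v h; exact h.1 rfl

instance {n k : ℕ} : DecidableRel (SnE n k).Adj := fun v w => by
  unfold SnE; exact inferInstanceAs (Decidable (_ ∧ _))

instance {α β : Type*} (G : SimpleGraph α) (H : SimpleGraph β) [DecidableRel G.Adj]
    [DecidableRel H.Adj] : DecidableRel (G ⊕g H).Adj := fun u v =>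
  match u, v with
  | Sum.inl a, Sum.inl b => decidable_of_iff (G.Adj a b) (by simp [SimpleGraph.sum])
  | Sum.inr a, Sum.inr b => decidable_of_iff (H.Adj a b) (by simp [SimpleGraph.sum])
  | Sum.inl _, Sum.inr _ => .isFalse (by simp [SimpleGraph.sum])
  | Sum.inr _, Sum.inl _ => .isFalse (by simp [SimpleGraph.sum])


open Matrix

noncomputable def Umat (n : ℕ) : Matrix (Fin n) (Fin 4) ℝ := fun i =>
  ![if i.val = 0 then 1 else 0, if i.val = 0 then 0 else 1,
    if i.val = 1 then 1 else 0, if 2 ≤ i.val ∧ i.val ≤ 5 then 1 else 0]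

noncomputable def Vmat (n : ℕ) : Matrix (Fin n) (Fin 4) ℝ := fun i =>
  ![if i.val = 0 then 0 else 1, if i.val = 0 then 1 else 0,
    if 2 ≤ i.val ∧ i.val ≤ 5 then 1 else 0, if i.val = 1 then 1 else 0]

set_option maxHeartbeats 1000000 in
lemma factorA (n : ℕ) :
    SimpleGraph.adjMatrix ℝ (SnE n 4) = Umat n * (Vmat n)ᵀ := by
  ext i j
  rw [Matrix.mul_apply, Fin.sum_univ_four]
  simp only [Umat, Vmat, Matrix.transpose_apply, SimpleGraph.adjMatrix_apply, SnE,
    Matrix.cons_val_zero, Matrix.cons_val_one, Matrix.head_cons, Matrix.cons_val_two,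
    Matrix.tail_cons, Matrix.cons_val_three]
  simp only [ne_eq, Fin.ext_iff, SimpleGraph.Adj]
  by_cases hij : i.val = j.val <;> by_cases hi0 : i.val = 0 <;> by_cases hj0 : j.val = 0 <;>
    by_cases hi1 : i.val = 1 <;> by_cases hj1 : j.val = 1 <;>
    by_cases hi25 : 2 ≤ i.val ∧ i.val ≤ 5 <;> by_cases hj25 : 2 ≤ j.val ∧ j.val ≤ 5 <;>
    simp only [hij, hi0, hj0, hi1, hj1, hi25, hj25, if_pos, if_neg, if_true, if_false,
      not_false_iff] <;>
    first | omega | (exfalso; omega) | (norm_num; omega) | norm_num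

lemma sum6 {n : ℕ} (hn : 6 ≤ n) (f : ℕ → ℝ) (hf : ∀ v, 6 ≤ v → f v = 0) :
    ∑ i : Fin n, f i.val = f 0 + f 1 + f 2 + f 3 + f 4 + f 5 := by
  rw [Fin.sum_univ_eq_sum_range]
  rw [← Finset.sum_subset (Finset.range_subset_range.2 hn)
    (fun x _ hx => hf x (by simpa using hx))]
  simp [Finset.sum_range_succ]


lemma sumne {n : ℕ} (hn : 6 ≤ n) :
    ∑ i : Fin n, (if i.val = 0 then (0:ℝ) else 1) * (if i.val = 0 then 0 else 1)
      = (n : ℝ) - 1 := by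
  have h : ∀ i : Fin n, (if i.val = 0 then (0:ℝ) else 1) * (if i.val = 0 then 0 else 1)
      = 1 - (if i.val = 0 then 1 else 0) := by
    intro i; split_ifs <;> norm_num
  rw [Finset.sum_congr rfl (fun i _ => h i), Finset.sum_sub_distrib]
  have h2 : ∑ i : Fin n, (if i.val = 0 then (1:ℝ) else 0) = 1 := by
    rw [Fin.sum_univ_eq_sum_range (fun v => if v = 0 then (1:ℝ) else 0) n,
      Finset.sum_ite_eq' (Finset.range n) 0 (fun _ => (1:ℝ)),
      if_pos (Finset.mem_range.2 (by omega))]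
  rw [h2, Finset.sum_const, Finset.card_univ, Fintype.card_fin]
  simp

noncomputable def M4 (n : ℕ) : Matrix (Fin 4) (Fin 4) ℝ :=
  !![0, (n:ℝ) - 1, 1, 4; 1, 0, 0, 0; 0, 4, 0, 4; 0, 1, 1, 0]

lemma eta4 {α : Type*} (A : Matrix (Fin 4) (Fin 4) α) :
    A = !![A 0 0, A 0 1, A 0 2, A 0 3;
           A 1 0, A 1 1, A 1 2, A 1 3;
           A 2 0, A 2 1, A 2 2, A 2 3;
           A 3 0, A 3 1, A 3 2, A 3 3] := by
  ext i j
  fin_cases i <;> fin_cases j <;> rfl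

set_option maxHeartbeats 1000000 in
lemma VtU {n : ℕ} (hn : 6 ≤ n) : (Vmat n)ᵀ * Umat n = M4 n := by
  have e00 : ((Vmat n)ᵀ * Umat n) 0 0 = 0 := by
    rw [Matrix.mul_apply]
    simp only [Matrix.transpose_apply, Umat, Vmat, Matrix.cons_val_zero, Matrix.cons_val_one,
      Matrix.head_cons, Matrix.cons_val_two, Matrix.tail_cons, Matrix.cons_val_three]
    have := sum6 hn (fun v => (if v = 0 then (0:ℝ) else 1) * (if v = 0 then (1:ℝ) else 0))
      (by intro v hv; beta_reduce; split_ifs <;> first | (exfalso; omega) | norm_num)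
    norm_num at this
    simpa using this
  have e01 : ((Vmat n)ᵀ * Umat n) 0 1 = (n:ℝ) - 1 := by
    rw [Matrix.mul_apply]
    simp only [Matrix.transpose_apply, Umat, Vmat, Matrix.cons_val_zero, Matrix.cons_val_one,
      Matrix.head_cons, Matrix.cons_val_two, Matrix.tail_cons, Matrix.cons_val_three]
    simpa using sumne hn
  have e02 : ((Vmat n)ᵀ * Umat n) 0 2 = 1 := by
    rw [Matrix.mul_apply]
    simp only [Matrix.transpose_apply, Umat, Vmat, Matrix.cons_val_zero, Matrix.cons_val_one,
      Matrix.head_cons, Matrix.cons_val_two, Matrix.tail_cons, Matrix.cons_val_three]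
    have := sum6 hn (fun v => (if v = 0 then (0:ℝ) else 1) * (if v = 1 then (1:ℝ) else 0))
      (by intro v hv; beta_reduce; split_ifs <;> first | (exfalso; omega) | norm_num)
    norm_num at this
    simpa using this
  have e03 : ((Vmat n)ᵀ * Umat n) 0 3 = 4 := by
    rw [Matrix.mul_apply]
    simp only [Matrix.transpose_apply, Umat, Vmat, Matrix.cons_val_zero, Matrix.cons_val_one,
      Matrix.head_cons, Matrix.cons_val_two, Matrix.tail_cons, Matrix.cons_val_three]
    have := sum6 hn (fun v => (if v = 0 then (0:ℝ) else 1) * (if 2 ≤ v ∧ v ≤ 5 then (1:ℝ) else 0))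
      (by intro v hv; beta_reduce; split_ifs <;> first | (exfalso; omega) | norm_num)
    norm_num at this
    simpa using this
  have e10 : ((Vmat n)ᵀ * Umat n) 1 0 = 1 := by
    rw [Matrix.mul_apply]
    simp only [Matrix.transpose_apply, Umat, Vmat, Matrix.cons_val_zero, Matrix.cons_val_one,
      Matrix.head_cons, Matrix.cons_val_two, Matrix.tail_cons, Matrix.cons_val_three]
    have := sum6 hn (fun v => (if v = 0 then (1:ℝ) else 0) * (if v = 0 then (1:ℝ) else 0))
      (by intro v hv; beta_reduce; split_ifs <;> first | (exfalso; omega) | norm_num)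
    norm_num at this
    simpa using this
  have e11 : ((Vmat n)ᵀ * Umat n) 1 1 = 0 := by
    rw [Matrix.mul_apply]
    simp only [Matrix.transpose_apply, Umat, Vmat, Matrix.cons_val_zero, Matrix.cons_val_one,
      Matrix.head_cons, Matrix.cons_val_two, Matrix.tail_cons, Matrix.cons_val_three]
    have := sum6 hn (fun v => (if v = 0 then (1:ℝ) else 0) * (if v = 0 then (0:ℝ) else 1))
      (by intro v hv; beta_reduce; split_ifs <;> first | (exfalso; omega) | norm_num)
    norm_num at this
    simpa using this
  have e12 : ((Vmat n)ᵀ * Umat n) 1 2 = 0 := by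
    rw [Matrix.mul_apply]
    simp only [Matrix.transpose_apply, Umat, Vmat, Matrix.cons_val_zero, Matrix.cons_val_one,
      Matrix.head_cons, Matrix.cons_val_two, Matrix.tail_cons, Matrix.cons_val_three]
    have := sum6 hn (fun v => (if v = 0 then (1:ℝ) else 0) * (if v = 1 then (1:ℝ) else 0))
      (by intro v hv; beta_reduce; split_ifs <;> first | (exfalso; omega) | norm_num)
    norm_num at this
    simpa using this
  have e13 : ((Vmat n)ᵀ * Umat n) 1 3 = 0 := by
    rw [Matrix.mul_apply]
    simp only [Matrix.transpose_apply, Umat, Vmat, Matrix.cons_val_zero, Matrix.cons_val_one,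
      Matrix.head_cons, Matrix.cons_val_two, Matrix.tail_cons, Matrix.cons_val_three]
    have := sum6 hn (fun v => (if v = 0 then (1:ℝ) else 0) * (if 2 ≤ v ∧ v ≤ 5 then (1:ℝ) else 0))
      (by intro v hv; beta_reduce; split_ifs <;> first | (exfalso; omega) | norm_num)
    norm_num at this
    simpa using this
  have e20 : ((Vmat n)ᵀ * Umat n) 2 0 = 0 := by
    rw [Matrix.mul_apply]
    simp only [Matrix.transpose_apply, Umat, Vmat, Matrix.cons_val_zero, Matrix.cons_val_one,
      Matrix.head_cons, Matrix.cons_val_two, Matrix.tail_cons, Matrix.cons_val_three]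
    have := sum6 hn (fun v => (if 2 ≤ v ∧ v ≤ 5 then (1:ℝ) else 0) * (if v = 0 then (1:ℝ) else 0))
      (by intro v hv; beta_reduce; split_ifs <;> first | (exfalso; omega) | norm_num)
    norm_num at this
    simpa using this
  have e21 : ((Vmat n)ᵀ * Umat n) 2 1 = 4 := by
    rw [Matrix.mul_apply]
    simp only [Matrix.transpose_apply, Umat, Vmat, Matrix.cons_val_zero, Matrix.cons_val_one,
      Matrix.head_cons, Matrix.cons_val_two, Matrix.tail_cons, Matrix.cons_val_three]
    have := sum6 hn (fun v => (if 2 ≤ v ∧ v ≤ 5 then (1:ℝ) else 0) * (if v = 0 then (0:ℝ) else 1))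
      (by intro v hv; beta_reduce; split_ifs <;> first | (exfalso; omega) | norm_num)
    norm_num at this
    simpa using this
  have e22 : ((Vmat n)ᵀ * Umat n) 2 2 = 0 := by
    rw [Matrix.mul_apply]
    simp only [Matrix.transpose_apply, Umat, Vmat, Matrix.cons_val_zero, Matrix.cons_val_one,
      Matrix.head_cons, Matrix.cons_val_two, Matrix.tail_cons, Matrix.cons_val_three]
    have := sum6 hn (fun v => (if 2 ≤ v ∧ v ≤ 5 then (1:ℝ) else 0) * (if v = 1 then (1:ℝ) else 0))
      (by intro v hv; beta_reduce; split_ifs <;> first | (exfalso; omega) | norm_num)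
    norm_num at this
    simpa using this
  have e23 : ((Vmat n)ᵀ * Umat n) 2 3 = 4 := by
    rw [Matrix.mul_apply]
    simp only [Matrix.transpose_apply, Umat, Vmat, Matrix.cons_val_zero, Matrix.cons_val_one,
      Matrix.head_cons, Matrix.cons_val_two, Matrix.tail_cons, Matrix.cons_val_three]
    have := sum6 hn (fun v => (if 2 ≤ v ∧ v ≤ 5 then (1:ℝ) else 0) * (if 2 ≤ v ∧ v ≤ 5 then (1:ℝ) else 0))
      (by intro v hv; beta_reduce; split_ifs <;> first | (exfalso; omega) | norm_num)
    norm_num at this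
    simpa using this
  have e30 : ((Vmat n)ᵀ * Umat n) 3 0 = 0 := by
    rw [Matrix.mul_apply]
    simp only [Matrix.transpose_apply, Umat, Vmat, Matrix.cons_val_zero, Matrix.cons_val_one,
      Matrix.head_cons, Matrix.cons_val_two, Matrix.tail_cons, Matrix.cons_val_three]
    have := sum6 hn (fun v => (if v = 1 then (1:ℝ) else 0) * (if v = 0 then (1:ℝ) else 0))
      (by intro v hv; beta_reduce; split_ifs <;> first | (exfalso; omega) | norm_num)
    norm_num at this
    simpa using this
  have e31 : ((Vmat n)ᵀ * Umat n) 3 1 = 1 := by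
    rw [Matrix.mul_apply]
    simp only [Matrix.transpose_apply, Umat, Vmat, Matrix.cons_val_zero, Matrix.cons_val_one,
      Matrix.head_cons, Matrix.cons_val_two, Matrix.tail_cons, Matrix.cons_val_three]
    have := sum6 hn (fun v => (if v = 1 then (1:ℝ) else 0) * (if v = 0 then (0:ℝ) else 1))
      (by intro v hv; beta_reduce; split_ifs <;> first | (exfalso; omega) | norm_num)
    norm_num at this
    simpa using this
  have e32 : ((Vmat n)ᵀ * Umat n) 3 2 = 1 := by
    rw [Matrix.mul_apply]
    simp only [Matrix.transpose_apply, Umat, Vmat, Matrix.cons_val_zero, Matrix.cons_val_one,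
      Matrix.head_cons, Matrix.cons_val_two, Matrix.tail_cons, Matrix.cons_val_three]
    have := sum6 hn (fun v => (if v = 1 then (1:ℝ) else 0) * (if v = 1 then (1:ℝ) else 0))
      (by intro v hv; beta_reduce; split_ifs <;> first | (exfalso; omega) | norm_num)
    norm_num at this
    simpa using this
  have e33 : ((Vmat n)ᵀ * Umat n) 3 3 = 0 := by
    rw [Matrix.mul_apply]
    simp only [Matrix.transpose_apply, Umat, Vmat, Matrix.cons_val_zero, Matrix.cons_val_one,
      Matrix.head_cons, Matrix.cons_val_two, Matrix.tail_cons, Matrix.cons_val_three]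
    have := sum6 hn (fun v => (if v = 1 then (1:ℝ) else 0) * (if 2 ≤ v ∧ v ≤ 5 then (1:ℝ) else 0))
      (by intro v hv; beta_reduce; split_ifs <;> first | (exfalso; omega) | norm_num)
    norm_num at this
    simpa using this
  rw [eta4 ((Vmat n)ᵀ * Umat n), e00, e01, e02, e03, e10, e11, e12, e13, e20, e21, e22, e23, e30, e31, e32, e33, M4]


lemma det4 (A : Matrix (Fin 4) (Fin 4) ℝ) :
    A.det = A 0 0*A 1 1*A 2 2*A 3 3 - A 0 0*A 1 1*A 2 3*A 3 2 - A 0 0*A 1 2*A 2 1*A 3 3 + A 0 0*A 1 2*A 2 3*A 3 1 + A 0 0*A 1 3*A 2 1*A 3 2 - A 0 0*A 1 3*A 2 2*A 3 1 - A 0 1*A 1 0*A 2 2*A 3 3 + A 0 1*A 1 0*A 2 3*A 3 2 + A 0 1*A 1 2*A 2 0*A 3 3 - A 0 1*A 1 2*A 2 3*A 3 0 - A 0 1*A 1 3*A 2 0*A 3 2 + A 0 1*A 1 3*A 2 2*A 3 0 + A 0 2*A 1 0*A 2 1*A 3 3 - A 0 2*A 1 0*A 2 3*A 3 1 - A 0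 2*A 1 1*A 2 0*A 3 3 + A 0 2*A 1 1*A 2 3*A 3 0 + A 0 2*A 1 3*A 2 0*A 3 1 - A 0 2*A 1 3*A 2 1*A 3 0 - A 0 3*A 1 0*A 2 1*A 3 2 + A 0 3*A 1 0*A 2 2*A 3 1 + A 0 3*A 1 1*A 2 0*A 3 2 - A 0 3*A 1 1*A 2 2*A 3 0 - A 0 3*A 1 2*A 2 0*A 3 1 + A 0 3*A 1 2*A 2 1*A 3 0 := by
  rw [Matrix.det_succ_row_zero, Fin.sum_univ_four]
  simp [Matrix.det_fin_three, Matrix.submatrix_apply, Fin.succAbove, Fin.lt_def,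
    show (Fin.succ 0 : Fin 4) = 1 from rfl, show (Fin.succ 1 : Fin 4) = 2 from rfl,
    show (Fin.succ 2 : Fin 4) = 3 from rfl,
    show ((3:Fin 4):ℕ) = 3 from rfl, show ((2:Fin 4):ℕ) = 2 from rfl,
    show ((1:Fin 4):ℕ) = 1 from rfl, show ((0:Fin 4):ℕ) = 0 from rfl,
    show (Fin.castSucc 0 : Fin 4) = 0 from rfl, show (Fin.castSucc 1 : Fin 4) = 1 from rfl,
    show (Fin.castSucc 2 : Fin 4) = 2 from rfl]
  ring

lemma evalCharpoly {n : ℕ} (A : Matrix (Fin n) (Fin n) ℝ) (x : ℝ) :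
    (Matrix.charpoly A).eval x = Matrix.det (x • (1 : Matrix (Fin n) (Fin n) ℝ) - A) := by
  rw [Matrix.charpoly, ← Polynomial.coe_evalRingHom, RingHom.map_det]
  congr 1
  ext i j
  by_cases h : i = j
  · subst h; simp [Matrix.charmatrix_apply_eq, Matrix.one_apply]
  · simp [Matrix.charmatrix_apply_ne _ _ _ h, Matrix.one_apply, h]


set_option maxHeartbeats 1000000 in
/-- The characteristic polynomial of `S_{n,n+3}` is
`x^n - (n+3)x^{n-2} - 8x^{n-3} + (4n-24)x^{n-4}`. -/
theorem charpoly_S_n_nplus3 (n : ℕ) (hn : 6 ≤ n) :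
    (SimpleGraph.adjMatrix ℝ (SnE n 4)).charpoly =
      X ^ n - C ((n : ℝ) + 3) * X ^ (n - 2) - C (8 : ℝ) * X ^ (n - 3)
        + C (4 * (n : ℝ) - 24) * X ^ (n - 4) := by
  apply Polynomial.eq_of_infinite_eval_eq
  apply Set.Infinite.mono (s := {x : ℝ | x ≠ 0})
  swap
  · exact (Set.finite_singleton (0:ℝ)).infinite_compl
  intro x hx
  simp only [Set.mem_setOf_eq] at hx ⊢
  rw [evalCharpoly, factorA]
  have key : x • (1 : Matrix (Fin n) (Fin n) ℝ) - Umat n * (Vmat n)ᵀ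
      = x • ((1 : Matrix (Fin n) (Fin n) ℝ) + ((-x⁻¹) • Umat n) * (Vmat n)ᵀ) := by
    rw [Matrix.smul_mul, smul_add, smul_smul, mul_neg, mul_inv_cancel₀ hx]
    simp [sub_eq_add_neg]
  rw [key, Matrix.det_smul, Matrix.det_one_add_mul_comm, Matrix.mul_smul, VtU hn]
  have hdet : Matrix.det ((1 : Matrix (Fin 4) (Fin 4) ℝ) + (-x⁻¹) • M4 n)
      = 1 - ((n:ℝ)+3)*x⁻¹^2 - 8*x⁻¹^3 + (4*(n:ℝ)-24)*x⁻¹^4 := by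
    rw [det4]
    norm_num [M4, Matrix.add_apply, Matrix.smul_apply, Matrix.one_apply, Fin.ext_iff,
      Matrix.cons_val_zero, Matrix.cons_val_one, Matrix.cons_val_two, Matrix.cons_val_three,
      Matrix.head_cons, Matrix.tail_cons,
      show ((3:Fin 4):ℕ) = 3 from rfl, show ((2:Fin 4):ℕ) = 2 from rfl,
      show ((1:Fin 4):ℕ) = 1 from rfl, show ((0:Fin 4):ℕ) = 0 from rfl]
    ring
  rw [hdet, Fintype.card_fin]
  simp only [eval_add, eval_sub, eval_mul, eval_pow, eval_X, eval_C]
  obtain ⟨m, rfl⟩ : ∃ m, n = m + 6 := ⟨n - 6, by omega⟩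
  simp only [show m + 6 - 2 = m + 4 by omega, show m + 6 - 3 = m + 3 by omega,
    show m + 6 - 4 = m + 2 by omega]
  field_simp
  ring
end

section
/- The characteristic polynomial of S_{n,n} is x^n − n x^{n−2} − 2x^{n−3} + (n−3)x^{n−4}. -/
open Polynomial MeasureTheory

set_option maxHeartbeats 1000000
set_option synthInstance.maxHeartbeats 400000

noncomputable abbrev KK := RatFunc ℝ
noncomputable def ff : ℝ[X] →+* KK := algebraMap _ _
noncomputable def tt : KK := ff X

-- decomposition matrices
noncomputable def Bm (N : ℕ) : Matrix (Fin N) (Fin 4) KK := fun i k =>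
  ![if i.val = 0 then 1 else 0, if i.val = 0 then 0 else 1,
    if i.val = 1 then 1 else 0, if i.val = 2 then 1 else 0] k

noncomputable def Cm (N : ℕ) : Matrix (Fin 4) (Fin N) KK := fun k j =>
  ![if j.val = 0 then 0 else 1, if j.val = 0 then 1 else 0,
    if j.val = 2 then 1 else 0, if j.val = 1 then 1 else 0] k


lemma adj_decomp (m : ℕ) :
    SimpleGraph.adjMatrix KK (SnE (m+4) 1) = Bm (m+4) * Cm (m+4) := by
  ext i j
  rw [Matrix.mul_apply, Fin.sum_univ_four]
  simp only [SimpleGraph.adjMatrix_apply, SnE, Bm, Cm, Matrix.cons_val_zero,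
    Matrix.cons_val_one, Matrix.head_cons, Fin.ne_iff_vne,
    Matrix.cons_val_two, Matrix.cons_val_three, Matrix.tail_cons]
  split_ifs <;> (try push_neg at *) <;> norm_num <;> omega

lemma ite_collapse (p : Prop) [Decidable p] (a b c : KK) :
    (if p then a else (if p then b else c)) = if p then a else c := by
  split_ifs <;> rfl

lemma hsum (m : ℕ) (z : Fin (m+4)) :
    ∑ x : Fin (m+4), (if x = z then (0:KK) else 1) = (m:KK) + 3 := by
  rw [Finset.sum_ite, Finset.sum_const_zero, Finset.sum_const, zero_add,
    nsmul_eq_mul, mul_one]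
  have : Finset.univ.filter (fun x : Fin (m+4) => ¬ x = z) = Finset.univ.erase z := by
    ext i; simp [Finset.mem_erase, and_comm]
  rw [this, Finset.card_erase_of_mem (Finset.mem_univ z), Finset.card_univ,
    Fintype.card_fin]
  push_cast [Nat.cast_sub (show 1 ≤ m+4 by omega)]
  ring

lemma ite_drop (m c : ℕ) (hc : c ≠ 0) (x : Fin (m+4)) :
    (if (x:ℕ) = 0 then (0:KK) else if (x:ℕ) = c then 1 else 0)
      = (if (x:ℕ) = c then 1 else 0) := by
  split_ifs <;> first | rfl | (exfalso; omega)

lemma hsum2 (m c : ℕ) (hc1 : c ≠ 0) (hc2 : c < m+4) :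
    ∑ x : Fin (m+4), (if (x:ℕ) = 0 then (0:KK) else if (x:ℕ) = c then 1 else 0) = 1 := by
  simp_rw [ite_drop m c hc1]
  rw [Fintype.sum_eq_single (⟨c, hc2⟩ : Fin (m+4))
    (fun b hb => if_neg (fun h => hb (Fin.ext h)))]
  simp

lemma cmbm (m : ℕ) :
    Cm (m+4) * Bm (m+4) =
      !![0, (m:KK)+3, 1, 1; 1, 0, 0, 0; 0, 1, 0, 1; 0, 1, 1, 0] := by
  have e0 : ∀ x : Fin (m+4), (x.val = 0) = (x = ⟨0, by omega⟩) := fun x => by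
    rw [Fin.ext_iff]
  have e1 : ∀ x : Fin (m+4), (x.val = 1) = (x = ⟨1, by omega⟩) := fun x => by
    rw [Fin.ext_iff]
  have e2 : ∀ x : Fin (m+4), (x.val = 2) = (x = ⟨2, by omega⟩) := fun x => by
    rw [Fin.ext_iff]
  ext k l
  rw [Matrix.mul_apply]
  fin_cases k <;> fin_cases l <;>
    simp [Bm, Cm, mul_ite, ite_mul, mul_one, mul_zero, one_mul, zero_mul,
      ite_drop, e0, e1, e2, ite_collapse, hsum, Finset.sum_ite_eq'] <;>
    norm_num [-Fin.val_eq_zero_iff, Fin.ext_iff, Matrix.vecHead, Matrix.vecTail]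
  · exact hsum2 m 2 (by omega) (by omega)
  · exact hsum2 m 1 (by omega) (by omega)

lemma tt_ne : tt ≠ 0 := by
  simpa [tt, ff] using RatFunc.algebraMap_ne_zero (Polynomial.X_ne_zero (R := ℝ))

/-- The characteristic polynomial of `S_{n,n}` is
`x^n - n x^{n-2} - 2x^{n-3} + (n-3)x^{n-4}`. -/
theorem charpoly_S_n_n (n : ℕ) (hn : 4 ≤ n) :
    (SimpleGraph.adjMatrix ℝ (SnE n 1)).charpoly =
      X ^ n - C ((n : ℝ)) * X ^ (n - 2) - C (2 : ℝ) * X ^ (n - 3)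
        + C ((n : ℝ) - 3) * X ^ (n - 4) := by
  obtain ⟨m, rfl⟩ : ∃ m, n = m + 4 := ⟨n - 4, by omega⟩
  apply RatFunc.algebraMap_injective ℝ
  have hmap : (Matrix.charmatrix (SimpleGraph.adjMatrix ℝ (SnE (m+4) 1))).map ff
      = tt • (1 : Matrix (Fin (m+4)) (Fin (m+4)) KK)
          - SimpleGraph.adjMatrix KK (SnE (m+4) 1) := by
    ext i j
    by_cases h : i = j <;>
      simp [h, Matrix.charmatrix_apply_eq, Matrix.charmatrix_apply_ne, Matrix.map_apply,
        tt, ff, Matrix.smul_apply, Matrix.one_apply, SimpleGraph.adjMatrix_apply, apply_ite]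
  have lhs_eq : ff (SimpleGraph.adjMatrix ℝ (SnE (m+4) 1)).charpoly
      = tt ^ (m+4) * Matrix.det (1 - tt⁻¹ •
          (!![0, (m:KK)+3, 1, 1; 1, 0, 0, 0; 0, 1, 0, 1; 0, 1, 1, 0])) := by
    rw [Matrix.charpoly, RingHom.map_det, RingHom.mapMatrix_apply, hmap, adj_decomp,
      show tt • (1 : Matrix (Fin (m+4)) (Fin (m+4)) KK) - Bm (m+4) * Cm (m+4)
        = tt • (1 - (tt⁻¹ • Bm (m+4)) * Cm (m+4)) by
          rw [smul_sub, Matrix.smul_mul, smul_smul, mul_inv_cancel₀ tt_ne, one_smul],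
      Matrix.det_smul, Matrix.det_one_sub_mul_comm]
    rw [show (Cm (m+4) * (tt⁻¹ • Bm (m+4))) = tt⁻¹ • (Cm (m+4) * Bm (m+4)) from
      Matrix.mul_smul _ _ _, cmbm]
    simp [Fintype.card_fin]
  show ff _ = ff (X ^ (m+4) - C (((m+4:ℕ) : ℝ)) * X ^ (m+4-2) - C (2:ℝ) * X ^ (m+4-3)
      + C (((m+4:ℕ) : ℝ) - 3) * X ^ (m+4-4))
  rw [lhs_eq]
  have hCf : ∀ r : ℝ, ff (Polynomial.C r) = algebraMap ℝ KK r := fun r => by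
    rw [show ff (Polynomial.C r) = RatFunc.C r from RatFunc.algebraMap_C r]
    rfl
  have hrhs : ff (X ^ (m+4) - C (((m+4 : ℕ) : ℝ)) * X ^ (m+4-2) - C (2:ℝ) * X ^ (m+4-3)
      + C (((m+4:ℕ) : ℝ) - 3) * X ^ (m+4-4))
      = tt^(m+4) - ((m:KK)+4) * tt^(m+2) - 2 * tt^(m+1) + ((m:KK)+1) * tt^m := by
    have h2 : m+4-2 = m+2 := by omega
    have h3 : m+4-3 = m+1 := by omega
    have h4 : m+4-4 = m := by omega
    rw [h2, h3, h4]
    rw [_root_.map_add, _root_.map_sub, _root_.map_sub, _root_.map_mul, _root_.map_mul,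
      _root_.map_mul, _root_.map_pow, _root_.map_pow, _root_.map_pow, _root_.map_pow,
      hCf, hCf, hCf, show ff X = tt from rfl]
    simp only [_root_.map_sub, map_natCast, map_ofNat]
    push_cast
    ring
  rw [hrhs]
  have key : tt^(m+4) * ((1:Matrix (Fin 4) (Fin 4) KK) - tt⁻¹ •
        (!![0, (m:KK)+3, 1, 1; 1, 0, 0, 0; 0, 1, 0, 1; 0, 1, 1, 0])).det
      = tt^m * ((tt • (1:Matrix (Fin 4) (Fin 4) KK) -
        (!![0, (m:KK)+3, 1, 1; 1, 0, 0, 0; 0, 1, 0, 1; 0, 1, 1, 0]))).det := by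
    rw [show tt • (1:Matrix (Fin 4) (Fin 4) KK) -
        (!![0, (m:KK)+3, 1, 1; 1, 0, 0, 0; 0, 1, 0, 1; 0, 1, 1, 0])
        = tt • ((1:Matrix (Fin 4) (Fin 4) KK) - tt⁻¹ •
        (!![0, (m:KK)+3, 1, 1; 1, 0, 0, 0; 0, 1, 0, 1; 0, 1, 1, 0])) by
      rw [smul_sub, smul_smul, mul_inv_cancel₀ tt_ne, one_smul]]
    rw [Matrix.det_smul, Fintype.card_fin, pow_add]
    ring
  rw [key]
  have hM : (tt • (1:Matrix (Fin 4) (Fin 4) KK) -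
      (!![0, (m:KK)+3, 1, 1; 1, 0, 0, 0; 0, 1, 0, 1; 0, 1, 1, 0]))
      = !![tt, -((m:KK)+3), -1, -1; -1, tt, 0, 0; 0, -1, tt, -1; 0, -1, -1, tt] := by
    ext i j
    fin_cases i <;> fin_cases j <;>
      simp [Matrix.one_apply, Matrix.vecHead, Matrix.vecTail] <;> ring
  rw [hM]
  rw [Matrix.det_succ_row_zero]
  simp [Fin.sum_univ_succ, Matrix.det_fin_three, Fin.succAbove]
  ring
end

section
/- For all natural numbers n ≥ 15, the polynomial f(x) = x^4 − (n+3)x^2 − 8x + 4n − 24 satisfies f(−√(n−1)) > 0, f(−2) < 0, f(0) > 0, f(2) < 0, and f(√(n+3)) > 0. -/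
open Polynomial MeasureTheory

/-- Sign pattern of `f(x) = x^4 - (n+3)x^2 - 8x + 4n - 24` for `n ≥ 15`. -/
theorem quartic_sign_pattern (n : ℕ) (hn : 15 ≤ n)
    (f : ℝ → ℝ) (hf : ∀ x, f x = x ^ 4 - ((n : ℝ) + 3) * x ^ 2 - 8 * x + (4 * (n : ℝ) - 24)) :
    f (-(Real.sqrt ((n : ℝ) - 1))) > 0 ∧ f (-2) < 0 ∧ f 0 > 0 ∧ f 2 < 0 ∧
      f (Real.sqrt ((n : ℝ) + 3)) > 0 := by
  have hn' : (15:ℝ) ≤ (n:ℝ) := by exact_mod_cast hn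
  have h1 : (0:ℝ) ≤ (n:ℝ) - 1 := by linarith
  have h2 : (0:ℝ) ≤ (n:ℝ) + 3 := by linarith
  have hs1 : Real.sqrt ((n:ℝ) - 1) ^ 2 = (n:ℝ) - 1 := Real.sq_sqrt h1
  have hs2 : Real.sqrt ((n:ℝ) + 3) ^ 2 = (n:ℝ) + 3 := Real.sq_sqrt h2
  have hsl : (3:ℝ) ≤ Real.sqrt ((n:ℝ) - 1) := by
    rw [show (3:ℝ) = Real.sqrt 9 by rw [show (9:ℝ) = 3^2 by norm_num, Real.sqrt_sq]; norm_num]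
    exact Real.sqrt_le_sqrt (by linarith)
  have hsu : Real.sqrt ((n:ℝ) + 3) < ((n:ℝ) - 6) / 2 := by
    have : Real.sqrt ((n:ℝ) + 3) < Real.sqrt ((((n:ℝ) - 6) / 2) ^ 2) := by
      apply Real.sqrt_lt_sqrt h2
      nlinarith
    rwa [Real.sqrt_sq (by linarith)] at this
  refine ⟨?_, ?_, ?_, ?_, ?_⟩
  · rw [hf]; nlinarith [hs1, hsl]
  · rw [hf]; nlinarith
  · rw [hf]; nlinarith
  · rw [hf]; nlinarith
  · rw [hf]; nlinarith [hs2, hsu]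
end

section
/- For every natural number n ≥ 15, if λ₁, λ₂, λ₃, λ₄ are the four real roots (with multiplicity) of the polynomial x^4 − (n+3)x^2 − 8x + 4n − 24, then |λ₁| + |λ₂| + |λ₃| + |λ₄| < 4 + √(n−1) + √(n+3). -/
open Polynomial MeasureTheory

/-- If `λ₁, …, λ₄` are the four real roots (with multiplicity) of
`x^4 - (n+3)x^2 - 8x + 4n - 24` for `n ≥ 15`, then the sum of their absolute values is
less than `4 + √(n-1) + √(n+3)`. -/
theorem quartic_roots_abs_sum_lt (n : ℕ) (hn : 15 ≤ n) (l : Fin 4 → ℝ)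
    (h : (X ^ 4 - C ((n : ℝ) + 3) * X ^ 2 - C (8 : ℝ) * X + C (4 * (n : ℝ) - 24) : ℝ[X]) =
      ∏ i, (X - C (l i))) :
    ∑ i, |l i| < 4 + Real.sqrt ((n : ℝ) - 1) + Real.sqrt ((n : ℝ) + 3) := by
  
  have hn' : (15 : ℝ) ≤ (n : ℝ) := by exact_mod_cast hn
  set s := Real.sqrt ((n : ℝ) - 1) with hs
  set t := Real.sqrt ((n : ℝ) + 3) with ht
  have hs0 : 0 ≤ s := Real.sqrt_nonneg _
  have ht0 : 0 ≤ t := Real.sqrt_nonneg _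
  have hs2 : s ^ 2 = (n : ℝ) - 1 := Real.sq_sqrt (by linarith)
  have ht2 : t ^ 2 = (n : ℝ) + 3 := Real.sq_sqrt (by linarith)
  have hs_gt : (5/2 : ℝ) < s := by nlinarith
  have ht_gt : (2 : ℝ) < t := by nlinarith
  set f : ℝ → ℝ := fun x => x ^ 4 - ((n : ℝ) + 3) * x ^ 2 - 8 * x + (4 * (n : ℝ) - 24) with hf
  have hc : Continuous f := by fun_prop
  have hroot : ∀ x : ℝ, f x = 0 → ∃ i, l i = x := by
    intro x hx
    have h2 := congrArg (Polynomial.eval x) h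
    simp only [eval_add, eval_sub, eval_mul, eval_pow, eval_X, eval_C, eval_prod] at h2
    have h3 : ∏ i, (x - l i) = 0 := by rw [← h2]; simpa [hf] using hx
    obtain ⟨i, -, hi⟩ := Finset.prod_eq_zero_iff.mp h3
    exact ⟨i, by linarith⟩
  -- sign values
  have hfns : 0 < f (-s) := by
    show (0:ℝ) < (-s)^4 - ((n:ℝ)+3)*(-s)^2 - 8*(-s) + (4*(n:ℝ)-24)
    nlinarith [sq_nonneg s]
  have hfn2 : f (-2) < 0 := by show (-2:ℝ)^4 - ((n:ℝ)+3)*(-2)^2 - 8*(-2) + (4*(n:ℝ)-24) < 0; ring_nf; linarith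
  have hf0 : 0 < f 0 := by show (0:ℝ) < 0^4 - ((n:ℝ)+3)*0^2 - 8*0 + (4*(n:ℝ)-24); ring_nf; linarith
  have hf2 : f 2 < 0 := by show (2:ℝ)^4 - ((n:ℝ)+3)*2^2 - 8*2 + (4*(n:ℝ)-24) < 0; ring_nf; linarith
  have htlt : t < ((n:ℝ) - 6)/2 := by
    rw [ht]
    refine (Real.sqrt_lt' (by linarith)).mpr ?_
    nlinarith [mul_nonneg (by linarith : (0:ℝ) ≤ (n:ℝ) - 15) (by linarith : (0:ℝ) ≤ (n:ℝ) - 1)]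
  have hft : 0 < f t := by
    show (0:ℝ) < t^4 - ((n:ℝ)+3)*t^2 - 8*t + (4*(n:ℝ)-24)
    have e1 : t^4 = ((n:ℝ)+3)^2 := by rw [show t^4 = (t^2)^2 from by ring, ht2]
    have e2 : ((n:ℝ)+3)*t^2 = ((n:ℝ)+3)^2 := by rw [ht2]; ring
    linarith
  -- IVT roots
  obtain ⟨r1, hr1m, hr1⟩ := intermediate_value_Ioo' (by linarith : -s ≤ -2) hc.continuousOn
    (Set.mem_Ioo.mpr ⟨hfn2, hfns⟩)
  obtain ⟨r2, hr2m, hr2⟩ := intermediate_value_Ioo (by linarith : (-2:ℝ) ≤ 0) hc.continuousOn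
    (Set.mem_Ioo.mpr ⟨hfn2, hf0⟩)
  obtain ⟨r3, hr3m, hr3⟩ := intermediate_value_Ioo' (by linarith : (0:ℝ) ≤ 2) hc.continuousOn
    (Set.mem_Ioo.mpr ⟨hf2, hf0⟩)
  obtain ⟨r4, hr4m, hr4⟩ := intermediate_value_Ioo (by linarith : (2:ℝ) ≤ t) hc.continuousOn
    (Set.mem_Ioo.mpr ⟨hf2, hft⟩)
  obtain ⟨i1, hi1⟩ := hroot r1 hr1
  obtain ⟨i2, hi2⟩ := hroot r2 hr2
  obtain ⟨i3, hi3⟩ := hroot r3 hr3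
  obtain ⟨i4, hi4⟩ := hroot r4 hr4
  obtain ⟨hr1a, hr1b⟩ := hr1m
  obtain ⟨hr2a, hr2b⟩ := hr2m
  obtain ⟨hr3a, hr3b⟩ := hr3m
  obtain ⟨hr4a, hr4b⟩ := hr4m
  have h12 : i1 ≠ i2 := fun e => by rw [e, hi2] at hi1; linarith
  have h13 : i1 ≠ i3 := fun e => by rw [e, hi3] at hi1; linarith
  have h14 : i1 ≠ i4 := fun e => by rw [e, hi4] at hi1; linarith
  have h23 : i2 ≠ i3 := fun e => by rw [e, hi3] at hi2; linarith
  have h24 : i2 ≠ i4 := fun e => by rw [e, hi4] at hi2; linarith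
  have h34 : i3 ≠ i4 := fun e => by rw [e, hi4] at hi3; linarith
  have huniv : (Finset.univ : Finset (Fin 4)) = {i1, i2, i3, i4} := by
    symm
    apply Finset.eq_univ_of_card
    rw [Finset.card_insert_of_notMem (by simp [h12, h13, h14]),
        Finset.card_insert_of_notMem (by simp [h23, h24]),
        Finset.card_insert_of_notMem (by simp [h34]), Finset.card_singleton]
    simp
  rw [huniv, Finset.sum_insert (by simp [h12, h13, h14]),
      Finset.sum_insert (by simp [h23, h24]),
      Finset.sum_insert (by simp [h34]), Finset.sum_singleton,
      hi1, hi2, hi3, hi4,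
      abs_of_neg (by linarith : r1 < 0), abs_of_neg hr2b,
      abs_of_pos hr3a, abs_of_pos (by linarith : (0:ℝ) < r4)]
  linarith
end

section
/- For all n ≥ 6, the Coulson-type integral inequality holds: (1/(2π)) ∫_{−∞}^{∞} x^{−2} ln((1+(n+2)x^2+(3n−15)x^4)^2 + 36x^6) dx > (1/(2π)) ∫_{−∞}^{∞} x^{−2} ln((1+n x^2+(n−3)x^4)^2 + 4x^6) dx. -/
open Polynomial MeasureTheory

open Set

-- log(1+u) ≤ 4 u^(1/4)
lemma log_le_four_rpow {u : ℝ} (hu : 0 ≤ u) :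
    Real.log (1 + u) ≤ 4 * u ^ ((1:ℝ)/4) := by
  have h1 : (0:ℝ) < 1 + u := by linarith
  set v := u ^ ((1:ℝ)/4) with hv
  have hv0 : 0 ≤ v := Real.rpow_nonneg hu _
  have hv4 : v ^ (4:ℕ) = u := by
    rw [hv, ← Real.rpow_natCast (u ^ ((1:ℝ)/4)) 4, ← Real.rpow_mul hu]
    norm_num
  have key : (1 + u) ≤ (1 + v) ^ (4:ℕ) := by nlinarith [sq_nonneg v, sq_nonneg (v*v), hv0]
  have h2 : Real.log (1 + u) ≤ Real.log ((1+v)^(4:ℕ)) :=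
    Real.log_le_log h1 key
  rw [Real.log_pow] at h2
  have h3 : Real.log (1 + v) ≤ v := by
    have := Real.log_le_sub_one_of_pos (show (0:ℝ) < 1 + v by linarith)
    linarith
  push_cast at h2
  linarith

-- the dominating function is integrable
lemma integrable_min_rpow :
    Integrable (fun x : ℝ => min 1 (|x| ^ (-(3:ℝ)/2))) := by
  have hmeas : Measurable (fun x : ℝ => min 1 (|x| ^ (-(3:ℝ)/2))) := by
    fun_prop
  have hbd : ∀ x : ℝ, ‖min 1 (|x| ^ (-(3:ℝ)/2))‖ ≤ 1 := by
    intro x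
    have h0 : 0 ≤ |x| ^ (-(3:ℝ)/2) := Real.rpow_nonneg (abs_nonneg x) _
    rw [Real.norm_eq_abs, abs_of_nonneg (le_min zero_le_one h0)]
    exact min_le_left _ _
  have hIci : IntegrableOn (fun x : ℝ => min 1 (|x| ^ (-(3:ℝ)/2))) (Ici 0) := by
    have h1 : IntegrableOn (fun x : ℝ => min 1 (|x| ^ (-(3:ℝ)/2))) (Icc 0 1) := by
      refine Integrable.mono' (g := fun _ => (1:ℝ)) ?_ hmeas.aestronglyMeasurable.restrict
        (ae_of_all _ hbd)
      exact integrableOn_const (by simp)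
    have h2 : IntegrableOn (fun x : ℝ => min 1 (|x| ^ (-(3:ℝ)/2))) (Ioi 1) := by
      refine Integrable.mono' (integrableOn_Ioi_rpow_of_lt (a := -(3:ℝ)/2) (by norm_num) one_pos) 
        hmeas.aestronglyMeasurable.restrict ?_
      filter_upwards [ae_restrict_mem measurableSet_Ioi] with x hx
      have hx1 : (1:ℝ) < x := hx
      have h0 : 0 ≤ |x| ^ (-(3:ℝ)/2) := Real.rpow_nonneg (abs_nonneg x) _
      rw [Real.norm_eq_abs, abs_of_nonneg (le_min zero_le_one h0)]
      rw [abs_of_pos (by linarith)]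
      exact min_le_right _ _
    have := h1.union h2
    rwa [show Icc (0:ℝ) 1 ∪ Ioi 1 = Ici 0 by
      ext x; simp only [mem_union, mem_Icc, mem_Ioi, mem_Ici]; constructor
      · rintro (⟨h,_⟩|h) <;> linarith
      · intro h; rcases le_or_gt x 1 with h1 | h1
        · exact Or.inl ⟨h, h1⟩
        · exact Or.inr h1] at this
  have hIio : IntegrableOn (fun x : ℝ => min 1 (|x| ^ (-(3:ℝ)/2))) (Iio 0) := by
    refine (integrable_indicator_iff measurableSet_Iio).1 ?_
    have heq : (Iio (0:ℝ)).indicator (fun x : ℝ => min 1 (|x| ^ (-(3:ℝ)/2)))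
        = fun x => (Ioi (0:ℝ)).indicator (fun x : ℝ => min 1 (|x| ^ (-(3:ℝ)/2))) (-1 * x) := by
      funext x
      rcases lt_trichotomy x 0 with h | h | h
      · rw [indicator_of_mem (show x ∈ Iio (0:ℝ) from h),
          indicator_of_mem (show (-1)*x ∈ Ioi (0:ℝ) by simp only [mem_Ioi]; nlinarith)]
        simp [abs_neg]
      · subst h; simp
      · rw [indicator_of_notMem (show x ∉ Iio (0:ℝ) by simp only [mem_Iio]; linarith),
          indicator_of_notMem (show (-1)*x ∉ Ioi (0:ℝ) by simp only [mem_Ioi]; nlinarith)]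
    rw [heq]
    refine Integrable.comp_mul_left' ?_ (by norm_num)
    rw [integrable_indicator_iff measurableSet_Ioi]
    exact hIci.mono_set Ioi_subset_Ici_self
  have := hIio.union hIci
  rwa [Iio_union_Ici, integrableOn_univ] at this

lemma coeff_bound {a b c : ℝ} (ha : 0 ≤ a) (hb : 0 ≤ b) (hc : 0 ≤ c) {t : ℝ} (ht : 0 ≤ t) :
    (1 + a*t + b*t^2)^2 + c*t^3 ≤ (1 + (1+a+b+c)*t)^4 := by
  set M := 1 + a + b + c with hM
  have hM1 : 1 ≤ M := by linarith
  have e1 : 2*a ≤ 4*M := by nlinarith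
  have e2 : a^2 + 2*b ≤ 6*M^2 := by nlinarith
  have e3 : 2*a*b + c ≤ 4*M^3 := by nlinarith
  have e4 : b^2 ≤ M^4 := by nlinarith [mul_self_le_mul_self hb (show b ≤ M by linarith), sq_nonneg M, sq_nonneg (M^2 - 1)]
  have ht2 : (0:ℝ) ≤ t^2 := by positivity
  have ht3 : (0:ℝ) ≤ t^3 := by positivity
  have ht4 : (0:ℝ) ≤ t^4 := by positivity
  nlinarith [mul_le_mul_of_nonneg_right e1 ht, mul_le_mul_of_nonneg_right e2 ht2,
    mul_le_mul_of_nonneg_right e3 ht3, mul_le_mul_of_nonneg_right e4 ht4]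

lemma integrable_coulson (a b c : ℝ) (ha : 0 ≤ a) (hb : 0 ≤ b) (hc : 0 ≤ c) :
    Integrable (fun x : ℝ => (1 / x ^ 2) *
      Real.log ((1 + a * x ^ 2 + b * x ^ 4) ^ 2 + c * x ^ 6)) := by
  set M := 1 + a + b + c with hM
  have hM1 : (1:ℝ) ≤ M := by linarith
  have hMpos : (0:ℝ) < M := by linarith
  have hQ1 : ∀ x : ℝ, 1 ≤ (1 + a * x ^ 2 + b * x ^ 4) ^ 2 + c * x ^ 6 := by
    intro x
    have h2 : (0:ℝ) ≤ x^2 := by positivity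
    have h4 : (0:ℝ) ≤ x^4 := by positivity
    have h6 : (0:ℝ) ≤ x^6 := by positivity
    nlinarith [mul_nonneg ha h2, mul_nonneg hb h4, mul_nonneg hc h6]
  have hQM : ∀ x : ℝ, (1 + a * x ^ 2 + b * x ^ 4) ^ 2 + c * x ^ 6 ≤ (1 + M * x ^ 2) ^ 4 := by
    intro x
    have := coeff_bound ha hb hc (sq_nonneg x)
    calc (1 + a * x ^ 2 + b * x ^ 4) ^ 2 + c * x ^ 6
        = (1 + a*(x^2) + b*(x^2)^2)^2 + c*(x^2)^3 := by ring
      _ ≤ (1 + (1+a+b+c)*(x^2))^4 := this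
      _ = (1 + M * x ^ 2) ^ 4 := by rw [hM]
  have hnn : ∀ x : ℝ, 0 ≤ (1 / x ^ 2) *
      Real.log ((1 + a * x ^ 2 + b * x ^ 4) ^ 2 + c * x ^ 6) := fun x =>
    mul_nonneg (by positivity) (Real.log_nonneg (hQ1 x))
  have hmeas : Measurable (fun x : ℝ => (1 / x ^ 2) *
      Real.log ((1 + a * x ^ 2 + b * x ^ 4) ^ 2 + c * x ^ 6)) := by
    have h1 : Measurable fun x : ℝ => 1 / x ^ 2 := by
      simp only [one_div]; exact (measurable_id.pow_const 2).inv
    exact h1.mul (Real.measurable_log.comp (by fun_prop))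
  refine Integrable.mono' (integrable_min_rpow.const_mul (16*M)) hmeas.aestronglyMeasurable
    (ae_of_all _ ?_)
  intro x
  rw [Real.norm_eq_abs, abs_of_nonneg (hnn x)]
  rcases eq_or_ne x 0 with rfl | hx
  · simp [Real.zero_rpow (by norm_num : -(3:ℝ)/2 ≠ 0)]
  have habs : 0 < |x| := abs_pos.2 hx
  have hx2 : (0:ℝ) < x ^ 2 := by positivity
  have hQpos : (0:ℝ) < (1 + a * x ^ 2 + b * x ^ 4) ^ 2 + c * x ^ 6 :=
    lt_of_lt_of_le one_pos (hQ1 x)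
  have hlogQ : Real.log ((1 + a * x ^ 2 + b * x ^ 4) ^ 2 + c * x ^ 6)
      ≤ 4 * Real.log (1 + M * x ^ 2) := by
    have := Real.log_le_log hQpos (hQM x)
    rwa [Real.log_pow] at this
    -- note: (4:ℕ) cast
  rcases le_or_gt (|x|) 1 with hle | hlt
  · have hmin : min 1 (|x| ^ (-(3:ℝ)/2)) = 1 :=
      min_eq_left (Real.one_le_rpow_of_pos_of_le_one_of_nonpos habs hle (by norm_num))
    rw [hmin, mul_one]
    have hlog2 : Real.log (1 + M * x ^ 2) ≤ M * x ^ 2 := by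
      have := Real.log_le_sub_one_of_pos (show (0:ℝ) < 1 + M * x ^ 2 by nlinarith)
      linarith
    calc (1 / x ^ 2) * Real.log ((1 + a * x ^ 2 + b * x ^ 4) ^ 2 + c * x ^ 6)
        ≤ (1 / x ^ 2) * (4 * (M * x ^ 2)) := by
          apply mul_le_mul_of_nonneg_left _ (by positivity)
          nlinarith
      _ = 4 * M := by field_simp
      _ ≤ 16 * M := by linarith
  · have hmin : min 1 (|x| ^ (-(3:ℝ)/2)) = |x| ^ (-(3:ℝ)/2) :=
      min_eq_right (Real.rpow_le_one_of_one_le_of_nonpos hlt.le (by norm_num))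
    rw [hmin]
    have hu : (0:ℝ) ≤ M * x ^ 2 := by positivity
    have h4 := log_le_four_rpow hu
    have hsplit : (M * x ^ 2) ^ ((1:ℝ)/4) = M ^ ((1:ℝ)/4) * |x| ^ ((1:ℝ)/2) := by
      rw [Real.mul_rpow hMpos.le (sq_nonneg x)]
      congr 1
      rw [show x ^ 2 = |x| ^ (2:ℕ) by rw [sq_abs], ← Real.rpow_natCast |x| 2,
        ← Real.rpow_mul (abs_nonneg x)]
      norm_num
    have hM14 : M ^ ((1:ℝ)/4) ≤ M := by
      nth_rewrite 2 [show M = M ^ (1:ℝ) by rw [Real.rpow_one]]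
      exact Real.rpow_le_rpow_of_exponent_le hM1 (by norm_num)
    have hxr : (1 / x ^ 2) * |x| ^ ((1:ℝ)/2) = |x| ^ (-(3:ℝ)/2) := by
      rw [show x ^ 2 = |x| ^ (2:ℕ) by rw [sq_abs], ← Real.rpow_natCast |x| 2,
        one_div, ← Real.rpow_neg (abs_nonneg x), ← Real.rpow_add habs]
      norm_num
    have hlogbound : Real.log ((1 + a * x ^ 2 + b * x ^ 4) ^ 2 + c * x ^ 6)
        ≤ 16 * M * |x| ^ ((1:ℝ)/2) := by
      have hxp : (0:ℝ) ≤ |x| ^ ((1:ℝ)/2) := Real.rpow_nonneg (abs_nonneg x) _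
      calc Real.log ((1 + a * x ^ 2 + b * x ^ 4) ^ 2 + c * x ^ 6)
          ≤ 4 * Real.log (1 + M * x ^ 2) := hlogQ
        _ ≤ 4 * (4 * ((M * x ^ 2) ^ ((1:ℝ)/4))) := by linarith
        _ = 16 * (M ^ ((1:ℝ)/4) * |x| ^ ((1:ℝ)/2)) := by rw [hsplit]; ring
        _ ≤ 16 * M * |x| ^ ((1:ℝ)/2) := by nlinarith [Real.rpow_nonneg hMpos.le ((1:ℝ)/4)]
    calc (1 / x ^ 2) * Real.log ((1 + a * x ^ 2 + b * x ^ 4) ^ 2 + c * x ^ 6)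
        ≤ (1 / x ^ 2) * (16 * M * |x| ^ ((1:ℝ)/2)) :=
          mul_le_mul_of_nonneg_left hlogbound (by positivity)
      _ = 16 * M * ((1 / x ^ 2) * |x| ^ ((1:ℝ)/2)) := by ring
      _ = 16 * M * |x| ^ (-(3:ℝ)/2) := by rw [hxr]


/-- Coulson-type integral inequality comparing `E(S_{n,n+2})` and `E(S_{n,n})` for `n ≥ 6`. -/
theorem coulson_integral_ineq (n : ℕ) (hn : 6 ≤ n) :
    (1 / (2 * Real.pi)) * ∫ x : ℝ, (1 / x ^ 2) *
        Real.log ((1 + ((n : ℝ) + 2) * x ^ 2 + (3 * (n : ℝ) - 15) * x ^ 4) ^ 2 + 36 * x ^ 6) >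
      (1 / (2 * Real.pi)) * ∫ x : ℝ, (1 / x ^ 2) *
        Real.log ((1 + (n : ℝ) * x ^ 2 + ((n : ℝ) - 3) * x ^ 4) ^ 2 + 4 * x ^ 6) := by
  have h6 : (6:ℝ) ≤ (n:ℝ) := by exact_mod_cast hn
  set f : ℝ → ℝ := fun x => (1 / x ^ 2) *
    Real.log ((1 + ((n : ℝ) + 2) * x ^ 2 + (3 * (n : ℝ) - 15) * x ^ 4) ^ 2 + 36 * x ^ 6) with hf
  set g : ℝ → ℝ := fun x => (1 / x ^ 2) *
    Real.log ((1 + (n : ℝ) * x ^ 2 + ((n : ℝ) - 3) * x ^ 4) ^ 2 + 4 * x ^ 6) with hg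
  have hfInt : Integrable f :=
    integrable_coulson ((n:ℝ)+2) (3*(n:ℝ)-15) 36 (by linarith) (by linarith) (by norm_num)
  have hgInt : Integrable g :=
    integrable_coulson (n:ℝ) ((n:ℝ)-3) 4 (by linarith) (by linarith) (by norm_num)
  -- pointwise comparison facts
  have hBA : ∀ x : ℝ, x ≠ 0 →
      (1 + (n : ℝ) * x ^ 2 + ((n : ℝ) - 3) * x ^ 4) ^ 2 + 4 * x ^ 6 <
      (1 + ((n : ℝ) + 2) * x ^ 2 + (3 * (n : ℝ) - 15) * x ^ 4) ^ 2 + 36 * x ^ 6 := by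
    intro x hx
    have hx2 : (0:ℝ) < x ^ 2 := by positivity
    have hx4 : (0:ℝ) ≤ x ^ 4 := by positivity
    have hx6 : (0:ℝ) ≤ x ^ 6 := by positivity
    have d1 : (0:ℝ) < (1 + ((n : ℝ) + 2) * x ^ 2 + (3 * (n : ℝ) - 15) * x ^ 4)
        - (1 + (n : ℝ) * x ^ 2 + ((n : ℝ) - 3) * x ^ 4) := by nlinarith
    have s1 : (0:ℝ) < (1 + ((n : ℝ) + 2) * x ^ 2 + (3 * (n : ℝ) - 15) * x ^ 4)
        + (1 + (n : ℝ) * x ^ 2 + ((n : ℝ) - 3) * x ^ 4) := by nlinarith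
    nlinarith [mul_pos d1 s1]
  have hB1 : ∀ x : ℝ,
      (1:ℝ) ≤ (1 + (n : ℝ) * x ^ 2 + ((n : ℝ) - 3) * x ^ 4) ^ 2 + 4 * x ^ 6 := by
    intro x
    have hx2 : (0:ℝ) ≤ x ^ 2 := by positivity
    have hx4 : (0:ℝ) ≤ x ^ 4 := by positivity
    have hx6 : (0:ℝ) ≤ x ^ 6 := by positivity
    have hb1 : (1:ℝ) ≤ 1 + (n : ℝ) * x ^ 2 + ((n : ℝ) - 3) * x ^ 4 := by nlinarith
    have hsq : (1:ℝ) ≤ (1 + (n : ℝ) * x ^ 2 + ((n : ℝ) - 3) * x ^ 4) ^ 2 := one_le_pow₀ hb1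
    linarith
  have hnn : ∀ x : ℝ, 0 ≤ f x - g x := by
    intro x
    rcases eq_or_ne x 0 with rfl | hx
    · simp [hf, hg]
    · have hlog : Real.log ((1 + (n : ℝ) * x ^ 2 + ((n : ℝ) - 3) * x ^ 4) ^ 2 + 4 * x ^ 6)
          ≤ Real.log ((1 + ((n : ℝ) + 2) * x ^ 2 + (3 * (n : ℝ) - 15) * x ^ 4) ^ 2 + 36 * x ^ 6) :=
        Real.log_le_log (lt_of_lt_of_le one_pos (hB1 x)) (hBA x hx).le
      have : g x ≤ f x := mul_le_mul_of_nonneg_left hlog (by positivity)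
      linarith
  have hstrict : ∀ x : ℝ, x ≠ 0 → 0 < f x - g x := by
    intro x hx
    have hx2 : (0:ℝ) < x ^ 2 := by positivity
    have hlog : Real.log ((1 + (n : ℝ) * x ^ 2 + ((n : ℝ) - 3) * x ^ 4) ^ 2 + 4 * x ^ 6)
        < Real.log ((1 + ((n : ℝ) + 2) * x ^ 2 + (3 * (n : ℝ) - 15) * x ^ 4) ^ 2 + 36 * x ^ 6) :=
      Real.log_lt_log (lt_of_lt_of_le one_pos (hB1 x)) (hBA x hx)
    have h1 : (0:ℝ) < 1 / x ^ 2 := by positivity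
    have : g x < f x := by
      simp only [hf, hg]
      exact mul_lt_mul_of_pos_left hlog h1
    linarith
  have hsub : Integrable (fun x => f x - g x) := hfInt.sub hgInt
  have hpos : 0 < ∫ x : ℝ, (f x - g x) := by
    rw [integral_pos_iff_support_of_nonneg hnn hsub]
    refine lt_of_lt_of_le ?_ (measure_mono (show Ioi (0:ℝ) ⊆ Function.support (fun x => f x - g x) from
      fun x hx => (hstrict x (ne_of_gt hx)).ne'))
    rw [Real.volume_Ioi]
    exact ENNReal.zero_lt_top
  have hint : ∫ x : ℝ, (f x - g x) = (∫ x : ℝ, f x) - ∫ x : ℝ, g x := integral_sub hfInt hgInt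
  have hlt : (∫ x : ℝ, g x) < ∫ x : ℝ, f x := by linarith
  have hc : (0:ℝ) < 1 / (2 * Real.pi) := by positivity
  exact mul_lt_mul_of_pos_left hlt hc
end

section
/- For all real x and all n ≥ 6: (1+(n+2)x^2+(3n−15)x^4)^2 + 36x^6 ≥ (1+n x^2+(n−3)x^4)^2 + 4x^6, with strict inequality whenever x ≠ 0. -/
open Polynomial MeasureTheory

/-- Pointwise inequality between the Coulson integrands of `E(S_{n,n+2})` and `E(S_{n,n})`. -/
theorem pointwise_integrand_ineq (n : ℕ) (hn : 6 ≤ n) (x : ℝ) :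
    (1 + ((n : ℝ) + 2) * x ^ 2 + (3 * (n : ℝ) - 15) * x ^ 4) ^ 2 + 36 * x ^ 6 ≥
      (1 + (n : ℝ) * x ^ 2 + ((n : ℝ) - 3) * x ^ 4) ^ 2 + 4 * x ^ 6 ∧
    (x ≠ 0 →
      (1 + ((n : ℝ) + 2) * x ^ 2 + (3 * (n : ℝ) - 15) * x ^ 4) ^ 2 + 36 * x ^ 6 >
        (1 + (n : ℝ) * x ^ 2 + ((n : ℝ) - 3) * x ^ 4) ^ 2 + 4 * x ^ 6) := by
  have hn' : (6 : ℝ) ≤ n := by exact_mod_cast hn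
  constructor
  · nlinarith [sq_nonneg x, sq_nonneg (x^2), sq_nonneg (x^3), sq_nonneg (x^4), mul_nonneg (sq_nonneg x) (sq_nonneg (x^2)), mul_nonneg (mul_nonneg (sq_nonneg x) (sq_nonneg x)) (sq_nonneg (x^2)), mul_nonneg (sub_nonneg.2 hn') (sq_nonneg (x^2)), mul_nonneg (sub_nonneg.2 hn') (mul_nonneg (sq_nonneg x) (sq_nonneg (x^2))), mul_nonneg (sub_nonneg.2 hn') (mul_nonneg (mul_nonneg (sq_nonneg x) (sq_nonneg x)) (sq_nonneg (x^2)))]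
  · intro hx
    have h2 : 0 < x^2 := by positivity
    nlinarith [sq_nonneg (x^2), sq_nonneg (x^3), mul_pos h2 h2, mul_pos (mul_pos h2 h2) h2, mul_nonneg (sub_nonneg.2 hn') (sq_nonneg (x^2)), mul_pos (mul_pos h2 h2) (mul_pos h2 h2), mul_nonneg (sub_nonneg.2 hn') (mul_pos (mul_pos h2 h2) h2).le, mul_nonneg (sub_nonneg.2 hn') (mul_pos (mul_pos h2 h2) (mul_pos h2 h2)).le]
end
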